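/- For real numbers λ₁, λ₂, λ₃ with |λᵢ| < 1, pairwise distinct, and a nonnegative integer S, the sum over the closed first quadrant ∑_{j₁≥0} ∑_{j₂≥0} λ₁^{j₁} λ₂^{j₂} λ₃^{|S-j₁-j₂|} equals λ₁^{S+2}(1-λ₃²)/((λ₁-λ₂)(λ₁-λ₃)(1-λ₁λ₃)) + λ₂^{S+2}(1-λ₃²)/((λ₂-λ₁)(λ₂-λ₃)(1-λ₂λ₃)) + λ₃^{S+2}/((λ₃-λ₁)(λ₃-λ₂)). -/

import Mathlib

open Finset

private lemma geom2 (x y : ℝ) (hxy : x ≠ y) (n : ℕ) :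
    ∑ k ∈ range (n + 1), x ^ k * y ^ (n - k) = (x ^ (n + 1) - y ^ (n + 1)) / (x - y) := by
  rw [eq_div_iff (sub_ne_zero.mpr hxy), ← geom_sum₂_mul x y (n + 1)]
  simp only [Nat.add_sub_cancel]

private lemma geom_aux (a c : ℝ) (ha : |a| < 1) (hc : |c| < 1) (S : ℕ) :
    Summable (fun n : ℕ => a ^ (n + 1) * c ^ ((S : ℤ) - n).natAbs) := by
  apply Summable.of_norm_bounded (g := fun n : ℕ => |a| ^ (n + 1))
  · have : Summable (fun n : ℕ => |a| * |a| ^ n) :=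
      (summable_geometric_of_lt_one (abs_nonneg a) ha).mul_left |a|
    simpa [pow_succ'] using this
  · intro n
    rw [Real.norm_eq_abs, abs_mul, abs_pow, abs_pow]
    have hb : |c| ^ (((S : ℤ) - n).natAbs) ≤ 1 :=
      pow_le_one₀ (abs_nonneg c) hc.le
    calc |a| ^ (n + 1) * |c| ^ (((S : ℤ) - n).natAbs)
        ≤ |a| ^ (n + 1) * 1 := mul_le_mul_of_nonneg_left hb (by positivity)
      _ = |a| ^ (n + 1) := by ring

private lemma Gval (a c : ℝ) (ha : |a| < 1) (hc : |c| < 1) (hac : a ≠ c) (S : ℕ) :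
    ∑' n : ℕ, a ^ (n + 1) * c ^ ((S : ℤ) - n).natAbs
      = a * (a ^ (S + 1) - c ^ (S + 1)) / (a - c) + a ^ (S + 2) * c / (1 - a * c) := by
  have hsum := geom_aux a c ha hc S
  rw [← Summable.sum_add_tsum_nat_add (S + 1) hsum]
  have hfin : ∑ n ∈ range (S + 1), a ^ (n + 1) * c ^ ((S : ℤ) - n).natAbs
      = a * (a ^ (S + 1) - c ^ (S + 1)) / (a - c) := by
    have h1 : ∑ n ∈ range (S + 1), a ^ (n + 1) * c ^ ((S : ℤ) - n).natAbs
        = a * ∑ n ∈ range (S + 1), a ^ n * c ^ (S - n) := by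
      rw [Finset.mul_sum]
      apply Finset.sum_congr rfl
      intro n hn
      rw [Finset.mem_range] at hn
      have hn' : ((S : ℤ) - n).natAbs = S - n := by omega
      rw [hn']
      ring
    rw [h1, geom2 a c hac S, mul_div_assoc]
  have htail : ∑' n : ℕ, a ^ ((n + (S + 1)) + 1) * c ^ ((S : ℤ) - ((n + (S + 1)) : ℕ)).natAbs
      = a ^ (S + 2) * c / (1 - a * c) := by
    have h1 : ∀ n : ℕ, a ^ ((n + (S + 1)) + 1) * c ^ ((S : ℤ) - ((n + (S + 1)) : ℕ)).natAbs
        = (a ^ (S + 2) * c) * (a * c) ^ n := by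
      intro n
      have h2 : ((S : ℤ) - ((n + (S + 1)) : ℕ)).natAbs = n + 1 := by
        push_cast
        omega
      simp only [h2]
      ring
    simp only [h1]
    have hlt : ‖a * c‖ < 1 := by
      rw [Real.norm_eq_abs, abs_mul]
      nlinarith [abs_nonneg a, abs_nonneg c]
    rw [tsum_mul_left, tsum_geometric_of_norm_lt_one hlt, div_eq_mul_inv]
  rw [hfin, htail]

set_option maxHeartbeats 1600000 in
theorem stmt_8 (l1 l2 l3 : ℝ) (h1 : |l1| < 1) (h2 : |l2| < 1) (h3 : |l3| < 1)
    (h12 : l1 ≠ l2) (h13 : l1 ≠ l3) (h23 : l2 ≠ l3) (S : ℕ) :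
    ∑' p : ℕ × ℕ, l1 ^ p.1 * l2 ^ p.2 * l3 ^ ((S : ℤ) - p.1 - p.2).natAbs =
      l1 ^ (S + 2) * (1 - l3 ^ 2) / ((l1 - l2) * (l1 - l3) * (1 - l1 * l3)) +
      l2 ^ (S + 2) * (1 - l3 ^ 2) / ((l2 - l1) * (l2 - l3) * (1 - l2 * l3)) +
      l3 ^ (S + 2) / ((l3 - l1) * (l3 - l2)) := by
  set f : ℕ × ℕ → ℝ := fun p => l1 ^ p.1 * l2 ^ p.2 * l3 ^ ((S : ℤ) - p.1 - p.2).natAbs with hf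
  have hsum : Summable f := by
    apply Summable.of_norm_bounded (g := fun p : ℕ × ℕ => |l1| ^ p.1 * |l2| ^ p.2)
    · exact (summable_geometric_of_lt_one (abs_nonneg l1) h1).mul_of_nonneg
        (summable_geometric_of_lt_one (abs_nonneg l2) h2)
        (fun n => pow_nonneg (abs_nonneg _) _) (fun n => pow_nonneg (abs_nonneg _) _)
    · intro p
      rw [hf]
      rw [Real.norm_eq_abs, abs_mul, abs_mul, abs_pow, abs_pow, abs_pow]
      have hb : |l3| ^ (((S : ℤ) - p.1 - p.2).natAbs) ≤ 1 := pow_le_one₀ (abs_nonneg _) h3.le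
      calc |l1| ^ p.1 * |l2| ^ p.2 * |l3| ^ (((S : ℤ) - p.1 - p.2).natAbs)
          ≤ |l1| ^ p.1 * |l2| ^ p.2 * 1 := mul_le_mul_of_nonneg_left hb (by positivity)
        _ = |l1| ^ p.1 * |l2| ^ p.2 := by ring
  have hs : Summable (fun x : (n : ℕ) × {p : ℕ × ℕ // p ∈ antidiagonal n} =>
      f (Finset.HasAntidiagonal.sigmaAntidiagonalEquivProd x)) :=
    Finset.HasAntidiagonal.sigmaAntidiagonalEquivProd.summable_iff.mpr hsum
  have hfinsum : ∀ n : ℕ, ∑ p ∈ antidiagonal n, f p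
      = ((l1 ^ (n + 1) - l2 ^ (n + 1)) / (l1 - l2)) * l3 ^ ((S : ℤ) - n).natAbs := by
    intro n
    rw [Finset.Nat.sum_antidiagonal_eq_sum_range_succ_mk, ← geom2 l1 l2 h12 n,
      Finset.sum_mul]
    apply Finset.sum_congr rfl
    intro k hk
    rw [Finset.mem_range] at hk
    have hk' : k ≤ n := Nat.lt_succ_iff.mp hk
    rw [hf]
    have h2 : ((S : ℤ) - k - ((n - k : ℕ) : ℤ)).natAbs = ((S : ℤ) - n).natAbs := by
      congr 1
      omega
    simp only [h2]
  have hre : ∑' p : ℕ × ℕ, f p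
      = ∑' n : ℕ, ((l1 ^ (n + 1) - l2 ^ (n + 1)) / (l1 - l2)) * l3 ^ ((S : ℤ) - n).natAbs := by
    calc ∑' p : ℕ × ℕ, f p
        = ∑' x : (n : ℕ) × {p : ℕ × ℕ // p ∈ antidiagonal n},
            f (Finset.HasAntidiagonal.sigmaAntidiagonalEquivProd x) :=
          (Finset.HasAntidiagonal.sigmaAntidiagonalEquivProd.tsum_eq f).symm
      _ = ∑' n : ℕ, ∑' p : {p : ℕ × ℕ // p ∈ antidiagonal n}, f p := Summable.tsum_sigma hs
      _ = ∑' n : ℕ, ∑ p ∈ antidiagonal n, f p := by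
          congr 1
          funext n
          exact Finset.tsum_subtype (antidiagonal n) f
      _ = _ := by
          congr 1
          funext n
          exact hfinsum n
  rw [hre]
  have hterm : ∀ n : ℕ, ((l1 ^ (n + 1) - l2 ^ (n + 1)) / (l1 - l2)) * l3 ^ ((S : ℤ) - n).natAbs
      = (l1 ^ (n + 1) * l3 ^ ((S : ℤ) - n).natAbs
          - l2 ^ (n + 1) * l3 ^ ((S : ℤ) - n).natAbs) * (l1 - l2)⁻¹ := by
    intro n
    ring
  simp only [hterm]
  rw [tsum_mul_right, Summable.tsum_sub (geom_aux l1 l3 h1 h3 S) (geom_aux l2 l3 h2 h3 S),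
    Gval l1 l3 h1 h3 h13 S, Gval l2 l3 h2 h3 h23 S]
  have d12 : l1 - l2 ≠ 0 := sub_ne_zero.mpr h12
  have d21 : l2 - l1 ≠ 0 := sub_ne_zero.mpr (Ne.symm h12)
  have d13 : l1 - l3 ≠ 0 := sub_ne_zero.mpr h13
  have d23 : l2 - l3 ≠ 0 := sub_ne_zero.mpr h23
  have d31 : l3 - l1 ≠ 0 := fun h => h13 (by linarith [sub_eq_zero.mp h])
  have d32 : l3 - l2 ≠ 0 := fun h => h23 (by linarith [sub_eq_zero.mp h])
  have e1 : 1 - l1 * l3 ≠ 0 := by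
    have : |l1 * l3| < 1 := by rw [abs_mul]; nlinarith [abs_nonneg l1, abs_nonneg l3]
    intro h
    rw [sub_eq_zero] at h
    rw [← h] at this
    simp at this
  have e2 : 1 - l2 * l3 ≠ 0 := by
    have : |l2 * l3| < 1 := by rw [abs_mul]; nlinarith [abs_nonneg l2, abs_nonneg l3]
    intro h
    rw [sub_eq_zero] at h
    rw [← h] at this
    simp at this
  have e1' : 1 - l3 * l1 ≠ 0 := by rwa [mul_comm]
  have e2' : 1 - l3 * l2 ≠ 0 := by rwa [mul_comm]
  field_simp
  ring
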